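/- arXiv:1804.09845 — 2 statements merged into one kernel-verified Lean document; each statement's English description precedes it below -/
import Mathlib

section
/- Let λ² be a positive integer. For a positive integer q, write q = q₁·2^r with q₁ odd, and set ρ(q,λ) = √(gcd(q₁, λ²)·2^r). Then for every real a > 1 and every positive integer N, ∑_{q ≥ N} q^{-a} ρ(q,λ) ≤ C_a · N^{1-a} · σ_{-1/2}(λ²), where σ_{-1/2}(m) = ∑_{d ∣ m} d^{-1/2} and C_a depends only on a. -/
open Real



lemma step1 (a : ℝ) (ha : 1 < a) {x : ℝ} (hx : 1 ≤ x) :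
    x ^ (-a) ≤ (2:ℝ) ^ a / (a - 1) * (x ^ (1 - a) - (x + 1) ^ (1 - a)) := by
  have hx0 : (0:ℝ) < x := lt_of_lt_of_le one_pos hx
  obtain ⟨c, hc, hceq⟩ := exists_hasDerivAt_eq_slope (fun y => y ^ (1 - a))
      (fun y => (1 - a) * y ^ (-a)) (by linarith : x < x + 1)
      (by
        apply ContinuousOn.rpow_const continuousOn_id
        intro y hy
        simp only [Set.mem_Icc] at hy
        exact Or.inl (by simp only [id_eq]; nlinarith [hy.1]))
      (by
        intro y hy
        simp only [Set.mem_Ioo] at hy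
        have : y ≠ 0 := by nlinarith [hy.1]
        have h := Real.hasDerivAt_rpow_const (x := y) (p := 1 - a) (Or.inl this)
        convert h using 1
        ring_nf)
  simp only [Set.mem_Ioo] at hc
  have hc0 : 0 < c := by linarith
  have key : x ^ (1 - a) - (x + 1) ^ (1 - a) = (a - 1) * c ^ (-a) := by
    have : (1 - a) * c ^ (-a) = ((x + 1) ^ (1 - a) - x ^ (1 - a)) / (x + 1 - x) := hceq
    rw [show x + 1 - x = 1 by ring, div_one] at this
    linarith
  rw [key]
  have hca : (2 * x) ^ (-a) ≤ c ^ (-a) :=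
    Real.rpow_le_rpow_of_nonpos hc0 (by linarith) (by linarith)
  have h2x : (2 * x) ^ (-a) = (2:ℝ) ^ (-a) * x ^ (-a) :=
    Real.mul_rpow (by norm_num) hx0.le
  have ha1 : 0 < a - 1 := by linarith
  have h2a : (0:ℝ) < (2:ℝ) ^ a := Real.rpow_pos_of_pos two_pos a
  have hone : (2:ℝ) ^ a * (2:ℝ) ^ (-a) = 1 := by
    rw [← Real.rpow_add two_pos]; simp
  have hmain : x ^ (-a) ≤ (2:ℝ) ^ a * c ^ (-a) := by
    calc x ^ (-a) = (2:ℝ) ^ a * ((2:ℝ) ^ (-a) * x ^ (-a)) := by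
          rw [← mul_assoc, hone, one_mul]
      _ = (2:ℝ) ^ a * (2 * x) ^ (-a) := by rw [h2x]
      _ ≤ (2:ℝ) ^ a * c ^ (-a) := by
          exact mul_le_mul_of_nonneg_left hca h2a.le
  rw [div_mul_eq_mul_div, le_div_iff₀ ha1]
  nlinarith [hmain]
lemma summable_tail (a : ℝ) (ha : 1 < a) (K : ℕ) :
    Summable (fun k : ℕ => if K ≤ k then (k:ℝ) ^ (-a) else 0) := by
  have hs : Summable (fun k : ℕ => (k:ℝ) ^ (-a)) :=
    Real.summable_nat_rpow.mpr (by linarith)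
  apply Summable.of_nonneg_of_le _ _ hs
  · intro k; by_cases h : K ≤ k <;> simp [h]; positivity
  · intro k; by_cases h : K ≤ k <;> simp [h]; positivity

lemma tail_bound (a : ℝ) (ha : 1 < a) (K : ℕ) (hK : 1 ≤ K) :
    (∑' k : ℕ, if K ≤ k then (k:ℝ) ^ (-a) else 0)
      ≤ (2:ℝ) ^ a / (a - 1) * (K:ℝ) ^ (1 - a) := by
  have hsum := summable_tail a ha K
  have hshift : (∑' k : ℕ, if K ≤ k then (k:ℝ) ^ (-a) else 0)
      = ∑' i : ℕ, ((i + K : ℕ) : ℝ) ^ (-a) := by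
    rw [← Summable.sum_add_tsum_nat_add K hsum]
    have h1 : ∀ i ∈ Finset.range K, (if K ≤ i then (i:ℝ) ^ (-a) else 0) = 0 := by
      intro i hi
      simp [Nat.not_le.mpr (Finset.mem_range.mp hi)]
    rw [Finset.sum_eq_zero h1, zero_add]
    congr 1
    ext i
    simp [Nat.le_add_left]
  rw [hshift]
  have hsum2 : Summable (fun i : ℕ => ((i + K : ℕ) : ℝ) ^ (-a)) := by
    have := (summable_nat_add_iff K).mpr hsum
    refine this.congr fun i => ?_
    simp [Nat.le_add_left]
  apply Summable.tsum_le_of_sum_le hsum2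
  intro s
  obtain ⟨M, hM⟩ := s.exists_nat_subset_range
  calc (∑ i ∈ s, ((i + K : ℕ) : ℝ) ^ (-a))
      ≤ ∑ i ∈ Finset.range M, ((i + K : ℕ) : ℝ) ^ (-a) := by
        apply Finset.sum_le_sum_of_subset_of_nonneg hM
        intro i _ _; positivity
    _ ≤ ∑ i ∈ Finset.range M, (2:ℝ)^a/(a-1) *
          (((i + K : ℕ):ℝ) ^ (1-a) - ((i + 1 + K : ℕ):ℝ) ^ (1-a)) := by
        apply Finset.sum_le_sum
        intro i _
        have hx : (1:ℝ) ≤ ((i + K : ℕ) : ℝ) := by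
          have h1 : 1 ≤ i + K := by omega
          exact_mod_cast h1
        have := step1 a ha hx
        convert this using 3
        · rfl
        push_cast; ring
    _ = (2:ℝ)^a/(a-1) * (((0 + K : ℕ):ℝ) ^ (1-a) - ((M + K : ℕ):ℝ) ^ (1-a)) := by
        rw [← Finset.mul_sum]
        congr 1
        exact Finset.sum_range_sub' (fun i => ((i + K : ℕ):ℝ) ^ (1-a)) M
    _ ≤ (2:ℝ)^a/(a-1) * (K:ℝ) ^ (1-a) := by
        have h1 : (0:ℝ) ≤ ((M + K : ℕ):ℝ) ^ (1-a) := by positivity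
        have h2 : (0:ℝ) < (2:ℝ)^a/(a-1) := by
          apply div_pos (Real.rpow_pos_of_pos two_pos a); linarith
        have : ((0 + K : ℕ):ℝ) = (K:ℝ) := by norm_num
        rw [this]
        nlinarith
lemma mult_tail (a : ℝ) (ha : 1 < a) (m N : ℕ) (hm : 1 ≤ m) (hN : 1 ≤ N) :
    (∑' q : ℕ, if N ≤ q ∧ 1 ≤ q ∧ m ∣ q then ENNReal.ofReal ((q:ℝ) ^ (-a)) else 0)
      ≤ ENNReal.ofReal ((2:ℝ) ^ a / (a - 1) * ((N:ℝ) ^ (1 - a) / m)) := by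
  set F : ℕ → ENNReal :=
    fun q => if N ≤ q ∧ 1 ≤ q ∧ m ∣ q then ENNReal.ofReal ((q:ℝ) ^ (-a)) else 0 with hF
  have hm0 : 0 < m := hm
  have hinj : Function.Injective (fun k : ℕ => m * k) := fun x y h =>
    Nat.eq_of_mul_eq_mul_left hm0 h
  have hsupp : Function.support F ⊆ Set.range (fun k : ℕ => m * k) := by
    intro q hq
    have : N ≤ q ∧ 1 ≤ q ∧ m ∣ q := by
      by_contra h; exact hq (by simp [hF, h])
    obtain ⟨k, hk⟩ := this.2.2
    exact ⟨k, hk.symm⟩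
  have hre : (∑' q, F q) = ∑' k, F (m * k) := (hinj.tsum_eq hsupp).symm
  set K : ℕ := (N + m - 1) / m with hKdef
  have hiff : ∀ k : ℕ, (K ≤ k ↔ N ≤ m * k) := by
    intro k
    rw [hKdef, Nat.div_le_iff_le_mul_add_pred hm0]
    omega
  have hK1 : 1 ≤ K := by
    by_contra h
    have : K ≤ 0 := by omega
    have := (hiff 0).mp this
    omega
  have hterm : ∀ k : ℕ, F (m * k)
      = ENNReal.ofReal ((m:ℝ) ^ (-a)) * (if K ≤ k then ENNReal.ofReal ((k:ℝ) ^ (-a)) else 0) := by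
    intro k
    by_cases h : K ≤ k
    · have hk1 : 1 ≤ k := hK1.trans h
      have hc : N ≤ m * k ∧ 1 ≤ m * k ∧ m ∣ m * k :=
        ⟨(hiff k).mp h, Nat.mul_pos hm0 hk1, dvd_mul_right m k⟩
      simp only [hF, hc, and_self, if_true, h, if_true]
      rw [← ENNReal.ofReal_mul (by positivity)]
      congr 1
      push_cast
      rw [Real.mul_rpow (by positivity) (by positivity)]
    · have hc : ¬(N ≤ m * k ∧ 1 ≤ m * k ∧ m ∣ m * k) := by
        intro hc
        exact h ((hiff k).mpr hc.1)
      simp only [hF]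
      rw [if_neg hc, if_neg h, mul_zero]
  rw [hre]
  simp only [hterm]
  rw [ENNReal.tsum_mul_left]
  have htr : (∑' k : ℕ, if K ≤ k then ENNReal.ofReal ((k:ℝ) ^ (-a)) else 0)
      = ENNReal.ofReal (∑' k : ℕ, if K ≤ k then (k:ℝ) ^ (-a) else 0) := by
    rw [ENNReal.ofReal_tsum_of_nonneg (fun k => by positivity) (summable_tail a ha K)]
    congr 1; ext k; split <;> simp
  rw [htr]
  have h1 : (∑' k : ℕ, if K ≤ k then (k:ℝ) ^ (-a) else 0)
      ≤ (2:ℝ) ^ a / (a - 1) * ((N:ℝ) / m) ^ (1 - a) := by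
    refine (tail_bound a ha K hK1).trans ?_
    have hNm : (0:ℝ) < (N:ℝ) / m :=
      div_pos (by exact_mod_cast hN) (by exact_mod_cast hm0)
    have hKge : (N:ℝ) / m ≤ (K:ℝ) := by
      rw [div_le_iff₀ (by exact_mod_cast hm0 : (0:ℝ) < (m:ℝ))]
      have h2 : N ≤ K * m := by rw [mul_comm]; exact (hiff K).mp le_rfl
      exact_mod_cast h2
    have := Real.rpow_le_rpow_of_nonpos hNm hKge (by linarith : 1 - a ≤ 0)
    have hC : (0:ℝ) ≤ (2:ℝ)^a/(a-1) :=
      le_of_lt (div_pos (Real.rpow_pos_of_pos two_pos a) (by linarith))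
    exact mul_le_mul_of_nonneg_left this hC
  calc ENNReal.ofReal ((m:ℝ) ^ (-a)) *
        ENNReal.ofReal (∑' k : ℕ, if K ≤ k then (k:ℝ) ^ (-a) else 0)
      ≤ ENNReal.ofReal ((m:ℝ) ^ (-a)) *
        ENNReal.ofReal ((2:ℝ) ^ a / (a - 1) * ((N:ℝ) / m) ^ (1 - a)) := by
        exact mul_le_mul_right (ENNReal.ofReal_le_ofReal h1) _
    _ = ENNReal.ofReal ((2:ℝ) ^ a / (a - 1) * ((N:ℝ) ^ (1 - a) / m)) := by
        rw [← ENNReal.ofReal_mul (by positivity)]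
        congr 1
        have hm0' : (0:ℝ) < (m:ℝ) := by exact_mod_cast hm0
        have hN0' : (0:ℝ) < (N:ℝ) := by exact_mod_cast hN
        rw [Real.div_rpow hN0'.le hm0'.le]
        have hpow : (m:ℝ) ^ (1-a) ≠ 0 := (Real.rpow_pos_of_pos hm0' _).ne'
        have hsplit : (m:ℝ) ^ (-a) = (m:ℝ)⁻¹ * (m:ℝ) ^ (1-a) := by
          rw [← Real.rpow_neg_one (m:ℝ), ← Real.rpow_add hm0']
          congr 1
          ring
        have ha1 : a - 1 ≠ 0 := by linarith
        rw [hsplit]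
        field_simp
lemma sqrt_pow' (r : ℕ) : Real.sqrt ((2:ℝ) ^ r) = Real.sqrt 2 ^ r := by
  have h : ((2:ℝ)) ^ r = (Real.sqrt 2 ^ r) ^ 2 := by
    rw [← pow_mul, mul_comm, pow_mul, Real.sq_sqrt (by norm_num : (0:ℝ) ≤ 2)]
  rw [h, Real.sqrt_sq (pow_nonneg (Real.sqrt_nonneg 2) r)]

lemma div_sum (a : ℝ) (ha : 1 < a) (d N : ℕ) (hd : 1 ≤ d) (hN : 1 ≤ N) :
    (∑' r : ℕ, ENNReal.ofReal (Real.sqrt ((d:ℝ) * 2 ^ r)) *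
        ENNReal.ofReal ((2:ℝ) ^ a / (a - 1) * ((N:ℝ) ^ (1 - a) / ((d * 2 ^ r : ℕ) : ℝ))))
      ≤ ENNReal.ofReal (((2:ℝ) ^ a / (a - 1) * (1 - (Real.sqrt 2)⁻¹)⁻¹) *
          (N:ℝ) ^ (1 - a) * (d:ℝ) ^ (-(1/2 : ℝ))) := by
  have hd0 : (0:ℝ) < (d:ℝ) := by exact_mod_cast hd
  have hc0 : (0:ℝ) < (2:ℝ) ^ a / (a - 1) :=
    div_pos (Real.rpow_pos_of_pos two_pos a) (by linarith)
  have hN0 : (0:ℝ) < (N:ℝ) ^ (1 - a) :=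
    Real.rpow_pos_of_pos (by exact_mod_cast hN) _
  set t : ℝ := (Real.sqrt 2)⁻¹ with htdef
  have hs2 : 1 < Real.sqrt 2 := by
    have := Real.sqrt_lt_sqrt (by norm_num : (0:ℝ) ≤ 1) (by norm_num : (1:ℝ) < 2)
    simpa using this
  have ht0 : 0 ≤ t := inv_nonneg.mpr (Real.sqrt_nonneg 2)
  have ht1 : t < 1 := inv_lt_one_of_one_lt₀ hs2
  have key : ∀ r : ℕ, Real.sqrt ((d:ℝ) * 2 ^ r) *
      ((2:ℝ) ^ a / (a - 1) * ((N:ℝ) ^ (1 - a) / ((d * 2 ^ r : ℕ) : ℝ)))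
      = ((2:ℝ) ^ a / (a - 1) * (N:ℝ) ^ (1 - a) * (Real.sqrt (d:ℝ))⁻¹) * t ^ r := by
    intro r
    have hx0 : (0:ℝ) < (d:ℝ) * 2 ^ r := by positivity
    have hsx : (0:ℝ) < Real.sqrt ((d:ℝ) * 2 ^ r) := Real.sqrt_pos.mpr hx0
    have hcast : ((d * 2 ^ r : ℕ) : ℝ) = (d:ℝ) * 2 ^ r := by push_cast; ring
    rw [hcast]
    have hinv : Real.sqrt ((d:ℝ) * 2 ^ r) / ((d:ℝ) * 2 ^ r)
        = (Real.sqrt ((d:ℝ) * 2 ^ r))⁻¹ := by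
      rw [← Real.mul_self_sqrt hx0.le]
      field_simp
      rw [Real.sqrt_sq hsx.le]
    have hsplit : Real.sqrt ((d:ℝ) * 2 ^ r) = Real.sqrt (d:ℝ) * Real.sqrt 2 ^ r := by
      rw [Real.sqrt_mul hd0.le, sqrt_pow']
    calc Real.sqrt ((d:ℝ) * 2 ^ r) *
          ((2:ℝ) ^ a / (a - 1) * ((N:ℝ) ^ (1 - a) / ((d:ℝ) * 2 ^ r)))
        = (2:ℝ) ^ a / (a - 1) * (N:ℝ) ^ (1 - a) *
            (Real.sqrt ((d:ℝ) * 2 ^ r) / ((d:ℝ) * 2 ^ r)) := by ring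
      _ = (2:ℝ) ^ a / (a - 1) * (N:ℝ) ^ (1 - a) * (Real.sqrt ((d:ℝ) * 2 ^ r))⁻¹ := by
          rw [hinv]
      _ = ((2:ℝ) ^ a / (a - 1) * (N:ℝ) ^ (1 - a) * (Real.sqrt (d:ℝ))⁻¹) * t ^ r := by
          rw [hsplit, mul_inv, htdef, inv_pow]
          ring
  have hterm : ∀ r : ℕ, ENNReal.ofReal (Real.sqrt ((d:ℝ) * 2 ^ r)) *
      ENNReal.ofReal ((2:ℝ) ^ a / (a - 1) * ((N:ℝ) ^ (1 - a) / ((d * 2 ^ r : ℕ) : ℝ)))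
      = ENNReal.ofReal (((2:ℝ) ^ a / (a - 1) * (N:ℝ) ^ (1 - a) * (Real.sqrt (d:ℝ))⁻¹) * t ^ r) := by
    intro r
    rw [← ENNReal.ofReal_mul (Real.sqrt_nonneg _), key r]
  simp only [hterm]
  have hsummable : Summable (fun r : ℕ =>
      ((2:ℝ) ^ a / (a - 1) * (N:ℝ) ^ (1 - a) * (Real.sqrt (d:ℝ))⁻¹) * t ^ r) :=
    (summable_geometric_of_lt_one ht0 ht1).mul_left _
  rw [← ENNReal.ofReal_tsum_of_nonneg (fun r => by positivity) hsummable]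
  apply ENNReal.ofReal_le_ofReal
  rw [tsum_mul_left, tsum_geometric_of_lt_one ht0 ht1]
  have hinvd : (Real.sqrt (d:ℝ))⁻¹ = (d:ℝ) ^ (-(1/2 : ℝ)) := by
    rw [Real.sqrt_eq_rpow, ← Real.rpow_neg hd0.le]
  rw [hinvd]
  ring_nf
  exact le_rfl


lemma tsum_ofReal_le (f : ℕ → ℝ) (hf : ∀ q, 0 ≤ f q) (B : ℝ) (hB : 0 ≤ B)
    (h : (∑' q, ENNReal.ofReal (f q)) ≤ ENNReal.ofReal B) : (∑' q, f q) ≤ B := by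
  by_cases hs : Summable f
  · rw [← ENNReal.ofReal_tsum_of_nonneg hf hs] at h
    exact (ENNReal.ofReal_le_ofReal_iff hB).mp h
  · rw [tsum_eq_zero_of_not_summable hs]; exact hB

/-- with `ρ(q,λ) = √(gcd(q₁, λ²)·2^r)` where `q = q₁·2^r`, `q₁` odd,
for every `a > 1` there is `C_a` such that for all positive `λ²` and `N ≥ 1`,
`∑_{q ≥ N} q^{-a} ρ(q,λ) ≤ C_a N^{1-a} σ_{-1/2}(λ²)`. -/
theorem rho_tail_sum_bound (a : ℝ) (ha : 1 < a) :
    ∃ C : ℝ, 0 < C ∧ ∀ lamSq : ℕ, 0 < lamSq → ∀ N : ℕ, 1 ≤ N →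
      (∑' q : ℕ, if N ≤ q ∧ 1 ≤ q then
          (q : ℝ) ^ (-a) *
            Real.sqrt ((Nat.gcd (q / 2 ^ (q.factorization 2)) lamSq : ℝ) *
              2 ^ (q.factorization 2))
        else 0)
      ≤ C * (N : ℝ) ^ (1 - a) * ∑ d ∈ lamSq.divisors, (d : ℝ) ^ (-(1/2 : ℝ)) := by
  have hs2 : 1 < Real.sqrt 2 := by
    have := Real.sqrt_lt_sqrt (by norm_num : (0:ℝ) ≤ 1) (by norm_num : (1:ℝ) < 2)
    simpa using this
  have hc0 : (0:ℝ) < (2:ℝ) ^ a / (a - 1) :=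
    div_pos (Real.rpow_pos_of_pos two_pos a) (by linarith)
  have hg0 : (0:ℝ) < (1 - (Real.sqrt 2)⁻¹)⁻¹ := by
    have : (Real.sqrt 2)⁻¹ < 1 := inv_lt_one_of_one_lt₀ hs2
    have h1 : 0 < 1 - (Real.sqrt 2)⁻¹ := by linarith
    positivity
  refine ⟨(2:ℝ) ^ a / (a - 1) * (1 - (Real.sqrt 2)⁻¹)⁻¹, mul_pos hc0 hg0, ?_⟩
  intro lamSq hlam N hN
  set C : ℝ := (2:ℝ) ^ a / (a - 1) * (1 - (Real.sqrt 2)⁻¹)⁻¹ with hCdef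
  set f : ℕ → ℝ := fun q => if N ≤ q ∧ 1 ≤ q then
      (q : ℝ) ^ (-a) *
        Real.sqrt ((Nat.gcd (q / 2 ^ (q.factorization 2)) lamSq : ℝ) *
          2 ^ (q.factorization 2))
    else 0 with hfdef
  have hf0 : ∀ q, 0 ≤ f q := by
    intro q
    simp only [hfdef]
    split
    · exact mul_nonneg (Real.rpow_nonneg (Nat.cast_nonneg q) _) (Real.sqrt_nonneg _)
    · exact le_refl 0
  have hN0 : (0:ℝ) < (N:ℝ) ^ (1 - a) := Real.rpow_pos_of_pos (by exact_mod_cast hN) _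
  have hsig0 : (0:ℝ) ≤ ∑ d ∈ lamSq.divisors, (d : ℝ) ^ (-(1/2 : ℝ)) :=
    Finset.sum_nonneg fun d _ => Real.rpow_nonneg (Nat.cast_nonneg d) _
  have hB0 : (0:ℝ) ≤ C * (N : ℝ) ^ (1 - a) * ∑ d ∈ lamSq.divisors, (d : ℝ) ^ (-(1/2 : ℝ)) := by
    have := mul_pos hc0 hg0
    positivity
  apply tsum_ofReal_le f hf0 _ hB0
  -- ENNReal part
  set H : ℕ → ℕ → ℕ → ENNReal := fun d r q =>
    if N ≤ q ∧ 1 ≤ q ∧ d * 2 ^ r ∣ q then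
      ENNReal.ofReal ((q : ℝ) ^ (-a) * Real.sqrt ((d : ℝ) * 2 ^ r)) else 0 with hHdef
  have P1 : ∀ q : ℕ, ENNReal.ofReal (f q) ≤ ∑ d ∈ lamSq.divisors, ∑' r : ℕ, H d r q := by
    intro q
    by_cases hq : N ≤ q ∧ 1 ≤ q
    · set r₀ : ℕ := q.factorization 2 with hr₀
      set q₁ : ℕ := q / 2 ^ r₀ with hq₁
      set d₀ : ℕ := Nat.gcd q₁ lamSq with hd₀
      have hqpos : 0 < q := hq.2
      have hq₁pos : 0 < q₁ := Nat.ordCompl_pos 2 hqpos.ne'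
      have hd₀pos : 0 < d₀ := Nat.gcd_pos_of_pos_left lamSq hq₁pos
      have hd₀mem : d₀ ∈ lamSq.divisors :=
        Nat.mem_divisors.mpr ⟨Nat.gcd_dvd_right _ _, hlam.ne'⟩
      have heq : 2 ^ r₀ * q₁ = q := Nat.ordProj_mul_ordCompl_eq_self q 2
      have hdvd : d₀ * 2 ^ r₀ ∣ q := by
        have h1 : d₀ * 2 ^ r₀ ∣ q₁ * 2 ^ r₀ := mul_dvd_mul (Nat.gcd_dvd_left _ _) dvd_rfl
        rwa [mul_comm q₁, heq] at h1
      have hfq : ENNReal.ofReal (f q) = H d₀ r₀ q := by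
        simp only [hfdef, hHdef]
        rw [if_pos hq, if_pos ⟨hq.1, hq.2, hdvd⟩]
      rw [hfq]
      calc H d₀ r₀ q ≤ ∑' r : ℕ, H d₀ r q := ENNReal.le_tsum r₀
        _ ≤ ∑ d ∈ lamSq.divisors, ∑' r : ℕ, H d r q :=
            Finset.single_le_sum (f := fun d => ∑' r : ℕ, H d r q)
              (fun i _ => zero_le) hd₀mem
    · have : f q = 0 := if_neg hq
      rw [this]
      simp
  calc (∑' q : ℕ, ENNReal.ofReal (f q))
      ≤ ∑' q : ℕ, ∑ d ∈ lamSq.divisors, ∑' r : ℕ, H d r q :=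
        ENNReal.tsum_le_tsum P1
    _ = ∑ d ∈ lamSq.divisors, ∑' q : ℕ, ∑' r : ℕ, H d r q :=
        Summable.tsum_finsetSum (fun _ _ => ENNReal.summable)
    _ = ∑ d ∈ lamSq.divisors, ∑' r : ℕ, ∑' q : ℕ, H d r q := by
        refine Finset.sum_congr rfl fun d _ => ?_
        exact ENNReal.tsum_comm
    _ ≤ ∑ d ∈ lamSq.divisors, ENNReal.ofReal (C * (N:ℝ) ^ (1 - a) * (d:ℝ) ^ (-(1/2 : ℝ))) := by
        apply Finset.sum_le_sum
        intro d hd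
        have hd1 : 1 ≤ d := (Nat.pos_of_mem_divisors hd)
        have hstep : ∀ r : ℕ, (∑' q : ℕ, H d r q)
            ≤ ENNReal.ofReal (Real.sqrt ((d:ℝ) * 2 ^ r)) *
              ENNReal.ofReal ((2:ℝ) ^ a / (a - 1) * ((N:ℝ) ^ (1 - a) / ((d * 2 ^ r : ℕ) : ℝ))) := by
          intro r
          have hm : 1 ≤ d * 2 ^ r := Nat.mul_pos hd1 (Nat.pow_pos (by norm_num))
          have hrw : ∀ q : ℕ, H d r q = ENNReal.ofReal (Real.sqrt ((d:ℝ) * 2 ^ r)) *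
              (if N ≤ q ∧ 1 ≤ q ∧ d * 2 ^ r ∣ q then ENNReal.ofReal ((q:ℝ) ^ (-a)) else 0) := by
            intro q
            simp only [hHdef]
            split
            · rw [← ENNReal.ofReal_mul (Real.sqrt_nonneg _)]
              congr 1
              ring
            · rw [mul_zero]
          simp only [hrw]
          rw [ENNReal.tsum_mul_left]
          exact mul_le_mul_right (mult_tail a ha (d * 2 ^ r) N hm hN) _
        calc (∑' r : ℕ, ∑' q : ℕ, H d r q)
            ≤ ∑' r : ℕ, ENNReal.ofReal (Real.sqrt ((d:ℝ) * 2 ^ r)) *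
              ENNReal.ofReal ((2:ℝ) ^ a / (a - 1) * ((N:ℝ) ^ (1 - a) / ((d * 2 ^ r : ℕ) : ℝ))) :=
              ENNReal.tsum_le_tsum hstep
          _ ≤ ENNReal.ofReal (C * (N:ℝ) ^ (1 - a) * (d:ℝ) ^ (-(1/2 : ℝ))) := by
              rw [hCdef]
              exact div_sum a ha d N hd1 hN
    _ = ENNReal.ofReal (∑ d ∈ lamSq.divisors, C * (N:ℝ) ^ (1 - a) * (d:ℝ) ^ (-(1/2 : ℝ))) := by
        rw [ENNReal.ofReal_sum_of_nonneg]
        intro d _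
        have hC0 : 0 ≤ C := (mul_pos hc0 hg0).le
        positivity
    _ = ENNReal.ofReal (C * (N:ℝ) ^ (1 - a) * ∑ d ∈ lamSq.divisors, (d:ℝ) ^ (-(1/2 : ℝ))) := by
        rw [Finset.mul_sum]
end

section
/- Let λ² be a positive integer and define ρ(q,λ) = √(gcd(q₁, λ²)·2^r) where q = q₁·2^r with q₁ odd. Then for every η > 0 there is a constant C_η (depending only on η) such that for all positive integers N, ∑_{1 ≤ q ≤ N} q^η ρ(q,λ) ≤ C_η · N^{1+η} · σ_{-1/2}(λ²). -/
open Finset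

private lemma icc_filter_dvd (d N : ℕ) (hd : 0 < d) :
    (Finset.Icc 1 N).filter (d ∣ ·) = (Finset.Icc 1 (N / d)).image (d * ·) := by
  ext m
  simp only [mem_filter, mem_Icc, mem_image]
  constructor
  · rintro ⟨⟨h1, h2⟩, k, rfl⟩
    refine ⟨k, ⟨by nlinarith, (Nat.le_div_iff_mul_le hd).mpr (by linarith [Nat.mul_comm d k])⟩, rfl⟩
  · rintro ⟨k, ⟨hk1, hk2⟩, rfl⟩
    exact ⟨⟨Nat.one_le_iff_ne_zero.mpr (by positivity),
      by have := (Nat.le_div_iff_mul_le hd).mp hk2; linarith [Nat.mul_comm d k]⟩, ⟨k, rfl⟩⟩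

private lemma sumA : ∀ M : ℕ,
    ∑ m ∈ Finset.Icc 1 M, Real.sqrt ((2:ℝ) ^ (m.factorization 2)) ≤ 4 * M := by
  intro M
  induction M using Nat.strong_induction_on with
  | _ M ih =>
    rcases Nat.eq_zero_or_pos M with rfl | hM
    · simp
    have hsplit := Finset.sum_filter_add_sum_filter_not (Finset.Icc 1 M) (2 ∣ ·)
      (fun m => Real.sqrt ((2:ℝ) ^ (m.factorization 2)))
    have heven : ∑ m ∈ (Finset.Icc 1 M).filter (2 ∣ ·), Real.sqrt ((2:ℝ) ^ (m.factorization 2))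
        = Real.sqrt 2 * ∑ m ∈ Finset.Icc 1 (M/2), Real.sqrt ((2:ℝ) ^ (m.factorization 2)) := by
      rw [icc_filter_dvd 2 M (by norm_num),
        Finset.sum_image (by intro a _ b _ h; simp only at h; omega), Finset.mul_sum]
      refine Finset.sum_congr rfl fun m hm => ?_
      have hm1 : m ≠ 0 := by simp only [mem_Icc] at hm; omega
      have hv : (2*m).factorization 2 = m.factorization 2 + 1 := by
        rw [Nat.factorization_mul (by norm_num) hm1]
        simp [Nat.Prime.factorization Nat.prime_two]; omega
      rw [hv, pow_succ, Real.sqrt_mul (by positivity)]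
      ring
    have hodd : ∑ m ∈ (Finset.Icc 1 M).filter (¬ 2 ∣ ·), Real.sqrt ((2:ℝ) ^ (m.factorization 2))
        ≤ M := by
      have : ∀ m ∈ (Finset.Icc 1 M).filter (¬ 2 ∣ ·),
          Real.sqrt ((2:ℝ) ^ (m.factorization 2)) = 1 := by
        intro m hm
        simp only [mem_filter] at hm
        rw [Nat.factorization_eq_zero_of_not_dvd hm.2]
        simp
      rw [Finset.sum_congr rfl this, Finset.sum_const, nsmul_eq_mul, mul_one]
      have : ((Finset.Icc 1 M).filter (¬ 2 ∣ ·)).card ≤ M := by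
        calc _ ≤ (Finset.Icc 1 M).card := Finset.card_filter_le _ _
          _ = M := by rw [Nat.card_Icc]; omega
      exact_mod_cast this
    have hrec := ih (M/2) (Nat.div_lt_self hM one_lt_two)
    have hs2 : Real.sqrt 2 ≤ 1.5 := by
      nlinarith [Real.sq_sqrt (by norm_num : (0:ℝ) ≤ 2), Real.sqrt_nonneg 2]
    have hcast : ((M/2 : ℕ) : ℝ) ≤ (M : ℝ) / 2 := by
      exact_mod_cast Nat.cast_div_le
    have hs2n : (0:ℝ) ≤ Real.sqrt 2 := Real.sqrt_nonneg 2
    calc ∑ m ∈ Finset.Icc 1 M, Real.sqrt ((2:ℝ) ^ (m.factorization 2))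
        = Real.sqrt 2 * ∑ m ∈ Finset.Icc 1 (M/2), Real.sqrt ((2:ℝ) ^ (m.factorization 2))
            + ∑ m ∈ (Finset.Icc 1 M).filter (¬ 2 ∣ ·), Real.sqrt ((2:ℝ) ^ (m.factorization 2)) := by
          rw [← hsplit, heven]
      _ ≤ 4 * M := by
          have hq : (0:ℝ) ≤ ∑ m ∈ Finset.Icc 1 (M/2), Real.sqrt ((2:ℝ) ^ (m.factorization 2)) := by
            positivity
          nlinarith [mul_le_mul_of_nonneg_left hrec hs2n]

private lemma lemB (lamSq N d : ℕ) (hd : d ∈ lamSq.divisors) :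
    ∑ q ∈ Finset.Icc 1 N,
        (if d ∣ q / 2 ^ (q.factorization 2)
          then Real.sqrt ((d : ℝ) * 2 ^ (q.factorization 2)) else 0)
      ≤ 4 * N * (d : ℝ) ^ (-(1/2 : ℝ)) := by
  have hd1 : 0 < d := Nat.pos_of_mem_divisors hd
  by_cases hd2 : 2 ∣ d
  · have hz : ∀ q ∈ Finset.Icc 1 N,
        (if d ∣ q / 2 ^ (q.factorization 2)
          then Real.sqrt ((d : ℝ) * 2 ^ (q.factorization 2)) else 0) = 0 := by
      intro q hq
      have hq0 : q ≠ 0 := by simp only [mem_Icc] at hq; omega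
      rw [if_neg]
      intro hdvd
      exact Nat.not_dvd_ordCompl Nat.prime_two hq0 (hd2.trans hdvd)
    rw [Finset.sum_congr rfl hz, Finset.sum_const, smul_zero]
    positivity
  · -- d odd
    have step : ∀ q ∈ Finset.Icc 1 N,
        (if d ∣ q / 2 ^ (q.factorization 2)
          then Real.sqrt ((d : ℝ) * 2 ^ (q.factorization 2)) else 0)
        ≤ Real.sqrt d * (if d ∣ q then Real.sqrt ((2:ℝ) ^ (q.factorization 2)) else 0) := by
      intro q hq
      by_cases h : d ∣ q / 2 ^ (q.factorization 2)
      · rw [if_pos h, if_pos (h.trans (Nat.ordCompl_dvd q 2)),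
          Real.sqrt_mul (by positivity)]
      · rw [if_neg h]
        positivity
    have hfil : ∑ q ∈ Finset.Icc 1 N,
        (if d ∣ q then Real.sqrt ((2:ℝ) ^ (q.factorization 2)) else 0)
        = ∑ m ∈ Finset.Icc 1 (N / d), Real.sqrt ((2:ℝ) ^ (m.factorization 2)) := by
      rw [← Finset.sum_filter, icc_filter_dvd d N hd1,
        Finset.sum_image (fun a _ b _ h => Nat.eq_of_mul_eq_mul_left hd1 h)]
      refine Finset.sum_congr rfl fun m hm => ?_
      have hm1 : m ≠ 0 := by simp only [mem_Icc] at hm; omega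
      have hv : (d*m).factorization 2 = m.factorization 2 := by
        rw [Nat.factorization_mul (by omega) hm1]
        simp [Nat.factorization_eq_zero_of_not_dvd hd2]
      rw [hv]
    have hsd : (0:ℝ) < Real.sqrt d := Real.sqrt_pos.mpr (by exact_mod_cast hd1)
    have hdd : ((d:ℕ):ℝ) = Real.sqrt d * Real.sqrt d :=
      (Real.mul_self_sqrt (by positivity)).symm
    have hrw : (d : ℝ) ^ (-(1/2 : ℝ)) = (Real.sqrt d)⁻¹ := by
      rw [Real.rpow_neg (by positivity), ← Real.sqrt_eq_rpow]
    have hcast : ((N / d : ℕ) : ℝ) ≤ (N : ℝ) / d := Nat.cast_div_le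
    calc ∑ q ∈ Finset.Icc 1 N,
        (if d ∣ q / 2 ^ (q.factorization 2)
          then Real.sqrt ((d : ℝ) * 2 ^ (q.factorization 2)) else 0)
        ≤ ∑ q ∈ Finset.Icc 1 N, Real.sqrt d *
            (if d ∣ q then Real.sqrt ((2:ℝ) ^ (q.factorization 2)) else 0) :=
          Finset.sum_le_sum step
      _ = Real.sqrt d * ∑ m ∈ Finset.Icc 1 (N / d),
            Real.sqrt ((2:ℝ) ^ (m.factorization 2)) := by
          rw [← Finset.mul_sum, hfil]
      _ ≤ Real.sqrt d * (4 * ((N / d : ℕ) : ℝ)) := by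
          exact mul_le_mul_of_nonneg_left (sumA _) hsd.le
      _ ≤ Real.sqrt d * (4 * ((N : ℝ) / d)) := by
          have : (0:ℝ) ≤ Real.sqrt d := hsd.le
          gcongr
      _ = 4 * N * (d : ℝ) ^ (-(1/2 : ℝ)) := by
          rw [hrw]
          field_simp
          nlinarith [Real.mul_self_sqrt (by positivity : (0:ℝ) ≤ (d:ℝ))]


/-- with `ρ(q,λ) = √(gcd(q₁, λ²)·2^r)` where `q = q₁·2^r`, `q₁` odd,
for every `η > 0` there is `C_η` such that for all positive `λ²` and `N ≥ 1`,
`∑_{1 ≤ q ≤ N} q^η ρ(q,λ) ≤ C_η N^{1+η} σ_{-1/2}(λ²)`. -/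
theorem rho_initial_sum_bound (η : ℝ) (hη : 0 < η) :
    ∃ C : ℝ, 0 < C ∧ ∀ lamSq : ℕ, 0 < lamSq → ∀ N : ℕ, 1 ≤ N →
      (∑ q ∈ Finset.Icc 1 N,
          (q : ℝ) ^ η *
            Real.sqrt ((Nat.gcd (q / 2 ^ (q.factorization 2)) lamSq : ℝ) *
              2 ^ (q.factorization 2)))
      ≤ C * (N : ℝ) ^ (1 + η) * ∑ d ∈ lamSq.divisors, (d : ℝ) ^ (-(1/2 : ℝ)) := by
  refine ⟨4, by norm_num, ?_⟩
  intro lamSq hlam N hN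
  have hN0 : (0:ℝ) < N := by exact_mod_cast hN
  have step1 : ∀ q ∈ Finset.Icc 1 N,
      (q : ℝ) ^ η * Real.sqrt ((Nat.gcd (q / 2 ^ (q.factorization 2)) lamSq : ℝ) *
          2 ^ (q.factorization 2))
      ≤ (N : ℝ) ^ η * ∑ d ∈ lamSq.divisors,
          (if d ∣ q / 2 ^ (q.factorization 2)
            then Real.sqrt ((d : ℝ) * 2 ^ (q.factorization 2)) else 0) := by
    intro q hq
    simp only [Finset.mem_Icc] at hq
    have hqN : (q:ℝ) ≤ N := by exact_mod_cast hq.2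
    have h1 : (q:ℝ) ^ η ≤ (N:ℝ) ^ η :=
      Real.rpow_le_rpow (by positivity) hqN hη.le
    have hmem : Nat.gcd (q / 2 ^ (q.factorization 2)) lamSq ∈ lamSq.divisors :=
      Nat.mem_divisors.mpr ⟨Nat.gcd_dvd_right _ _, hlam.ne'⟩
    have h2 : Real.sqrt ((Nat.gcd (q / 2 ^ (q.factorization 2)) lamSq : ℝ) *
          2 ^ (q.factorization 2))
        ≤ ∑ d ∈ lamSq.divisors,
          (if d ∣ q / 2 ^ (q.factorization 2)
            then Real.sqrt ((d : ℝ) * 2 ^ (q.factorization 2)) else 0) := by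
      have := Finset.single_le_sum (f := fun d =>
          (if d ∣ q / 2 ^ (q.factorization 2)
            then Real.sqrt ((d : ℝ) * 2 ^ (q.factorization 2)) else 0))
        (fun d _ => by positivity) hmem
      simp only [if_pos (Nat.gcd_dvd_left (q / 2 ^ q.factorization 2) lamSq)] at this
      exact this
    exact mul_le_mul h1 h2 (Real.sqrt_nonneg _) (by positivity)
  calc ∑ q ∈ Finset.Icc 1 N,
        (q : ℝ) ^ η * Real.sqrt ((Nat.gcd (q / 2 ^ (q.factorization 2)) lamSq : ℝ) *
            2 ^ (q.factorization 2))
      ≤ ∑ q ∈ Finset.Icc 1 N, (N : ℝ) ^ η * ∑ d ∈ lamSq.divisors,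
          (if d ∣ q / 2 ^ (q.factorization 2)
            then Real.sqrt ((d : ℝ) * 2 ^ (q.factorization 2)) else 0) :=
        Finset.sum_le_sum step1
    _ = (N : ℝ) ^ η * ∑ d ∈ lamSq.divisors, ∑ q ∈ Finset.Icc 1 N,
          (if d ∣ q / 2 ^ (q.factorization 2)
            then Real.sqrt ((d : ℝ) * 2 ^ (q.factorization 2)) else 0) := by
        rw [← Finset.mul_sum, Finset.sum_comm]
    _ ≤ (N : ℝ) ^ η * ∑ d ∈ lamSq.divisors, 4 * N * (d : ℝ) ^ (-(1/2 : ℝ)) := by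
        refine mul_le_mul_of_nonneg_left (Finset.sum_le_sum fun d hd => lemB lamSq N d hd)
          (by positivity)
    _ = 4 * (N : ℝ) ^ (1 + η) * ∑ d ∈ lamSq.divisors, (d : ℝ) ^ (-(1/2 : ℝ)) := by
        rw [Real.rpow_add hN0, Real.rpow_one]
        rw [show ∀ x : ℕ → ℝ, (∑ d ∈ lamSq.divisors, 4 * (N:ℝ) * x d)
            = 4 * N * ∑ d ∈ lamSq.divisors, x d from fun x => by rw [Finset.mul_sum]]
        ring
end
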